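/- Let X be a radical object of C₂(P). The natural projection End_{C₂(P)}(X) → End_{K₂(P)}(X) restricts to a surjective group homomorphism p : Aut_{C₂(P)}(X) → Aut_{K₂(P)}(X) whose kernel is {1_X + f | f ∈ Htp(X,X)}; in particular the kernel is in bijection with the ℂ-vector space Htp(X,X) via f ↦ 1_X + f. -/

import Mathlib

open CategoryTheory

universe u

noncomputable section

variable (R : Type u) [Ring R]

structure TwoCx : Type (u + 1) where
  X1 : ModuleCat.{u} R
  X0 : ModuleCat.{u} R
  fin1 : Module.Finite R X1
  proj1 : Module.Projective R X1
  fin0 : Module.Finite R X0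
  proj0 : Module.Projective R X0
  d1 : X1 ⟶ X0
  d0 : X0 ⟶ X1
  dd1 : d1 ≫ d0 = 0
  dd0 : d0 ≫ d1 = 0

variable {R}

@[ext]
structure TwoHom (X Y : TwoCx R) : Type u where
  f1 : X.X1 ⟶ Y.X1
  f0 : X.X0 ⟶ Y.X0
  comm1 : X.d1 ≫ f0 = f1 ≫ Y.d1
  comm0 : X.d0 ≫ f1 = f0 ≫ Y.d0

instance : CategoryStruct (TwoCx R) where
  Hom := TwoHom
  id X := ⟨𝟙 X.X1, 𝟙 X.X0, by simp, by simp⟩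
  comp {X Y Z} f g :=
    ⟨f.f1 ≫ g.f1, f.f0 ≫ g.f0, by
      rw [← Category.assoc, f.comm1, Category.assoc, g.comm1, ← Category.assoc], by
      rw [← Category.assoc, f.comm0, Category.assoc, g.comm0, ← Category.assoc]⟩

@[simp] theorem id_f1 (X : TwoCx R) : TwoHom.f1 (𝟙 X) = 𝟙 X.X1 := rfl
@[simp] theorem id_f0 (X : TwoCx R) : TwoHom.f0 (𝟙 X) = 𝟙 X.X0 := rfl
@[simp] theorem comp_f1 {X Y Z : TwoCx R} (f : X ⟶ Y) (g : Y ⟶ Z) :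
    TwoHom.f1 (f ≫ g) = TwoHom.f1 f ≫ TwoHom.f1 g := rfl
@[simp] theorem comp_f0 {X Y Z : TwoCx R} (f : X ⟶ Y) (g : Y ⟶ Z) :
    TwoHom.f0 (f ≫ g) = TwoHom.f0 f ≫ TwoHom.f0 g := rfl

@[ext] theorem hom_ext {X Y : TwoCx R} {f g : X ⟶ Y}
    (h1 : TwoHom.f1 f = TwoHom.f1 g) (h0 : TwoHom.f0 f = TwoHom.f0 g) : f = g :=
  TwoHom.ext h1 h0

instance : Category (TwoCx R) where
  id_comp f := by ext <;> simp
  comp_id f := by ext <;> simp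
  assoc f g h := by ext <;> simp

section HomGroup

variable {X Y : TwoCx R}

instance : Zero (X ⟶ Y) :=
  ⟨TwoHom.mk 0 0 (by simp) (by simp)⟩

@[simp] theorem zero_f1 : TwoHom.f1 (0 : X ⟶ Y) = 0 := rfl
@[simp] theorem zero_f0 : TwoHom.f0 (0 : X ⟶ Y) = 0 := rfl

instance : Add (X ⟶ Y) :=
  ⟨fun f g => TwoHom.mk (f.f1 + g.f1) (f.f0 + g.f0)
    (by rw [Preadditive.comp_add, f.comm1, g.comm1, ← Preadditive.add_comp])
    (by rw [Preadditive.comp_add, f.comm0, g.comm0, ← Preadditive.add_comp])⟩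

@[simp] theorem add_f1 (f g : X ⟶ Y) :
    TwoHom.f1 (f + g) = TwoHom.f1 f + TwoHom.f1 g := rfl
@[simp] theorem add_f0 (f g : X ⟶ Y) :
    TwoHom.f0 (f + g) = TwoHom.f0 f + TwoHom.f0 g := rfl

instance : Neg (X ⟶ Y) :=
  ⟨fun f => TwoHom.mk (-f.f1) (-f.f0)
    (by rw [Preadditive.comp_neg, f.comm1, ← Preadditive.neg_comp])
    (by rw [Preadditive.comp_neg, f.comm0, ← Preadditive.neg_comp])⟩

@[simp] theorem neg_f1 (f : X ⟶ Y) : TwoHom.f1 (-f) = -TwoHom.f1 f := rfl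
@[simp] theorem neg_f0 (f : X ⟶ Y) : TwoHom.f0 (-f) = -TwoHom.f0 f := rfl

instance : AddCommGroup (X ⟶ Y) where
  add := (· + ·)
  zero := 0
  neg := Neg.neg
  add_assoc a b c := by ext <;> simp [add_assoc]
  zero_add a := by ext <;> simp
  add_zero a := by ext <;> simp
  add_comm a b := by ext <;> simp [add_comm]
  neg_add_cancel a := by ext <;> simp
  nsmul := nsmulRec
  zsmul := zsmulRec

@[simp] theorem sub_f1 (f g : X ⟶ Y) :
    TwoHom.f1 (f - g) = TwoHom.f1 f - TwoHom.f1 g := by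
  show TwoHom.f1 (f + -g) = _
  rw [add_f1, neg_f1, sub_eq_add_neg]

@[simp] theorem sub_f0 (f g : X ⟶ Y) :
    TwoHom.f0 (f - g) = TwoHom.f0 f - TwoHom.f0 g := by
  show TwoHom.f0 (f + -g) = _
  rw [add_f0, neg_f0, sub_eq_add_neg]

end HomGroup

instance : Preadditive (TwoCx R) where
  add_comp := by intros; ext <;> simp
  comp_add := by intros; ext <;> simp

def Homotopic {X Y : TwoCx R} (f g : X ⟶ Y) : Prop :=
  ∃ (h1 : X.X1 ⟶ Y.X0) (h0 : X.X0 ⟶ Y.X1),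
    TwoHom.f1 f - TwoHom.f1 g = h1 ≫ Y.d0 + X.d1 ≫ h0 ∧
    TwoHom.f0 f - TwoHom.f0 g = h0 ≫ Y.d1 + X.d0 ≫ h1

def Contractible (X : TwoCx R) : Prop := Homotopic (𝟙 X) (0 : X ⟶ X)

def IsHtpEquiv {X Y : TwoCx R} (f : X ⟶ Y) : Prop :=
  ∃ g : Y ⟶ X, Homotopic (f ≫ g) (𝟙 X) ∧ Homotopic (g ≫ f) (𝟙 Y)

def HtpEquiv (X Y : TwoCx R) : Prop := ∃ f : X ⟶ Y, IsHtpEquiv f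

def modRad (M : ModuleCat.{u} R) : Submodule R M :=
  sInf {N : Submodule R M | IsCoatom N}

def RadicalCx (X : TwoCx R) : Prop :=
  LinearMap.range X.d1.hom ≤ modRad X.X0 ∧ LinearMap.range X.d0.hom ≤ modRad X.X1

def dsum (X Y : TwoCx R) : TwoCx R where
  X1 := ModuleCat.of R (X.X1 × Y.X1)
  X0 := ModuleCat.of R (X.X0 × Y.X0)
  fin1 := by haveI := X.fin1; haveI := Y.fin1; exact (inferInstance : Module.Finite R (X.X1 × Y.X1))
  proj1 := by haveI := X.proj1; haveI := Y.proj1; exact (inferInstance : Module.Projective R (X.X1 × Y.X1))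
  fin0 := by haveI := X.fin0; haveI := Y.fin0; exact (inferInstance : Module.Finite R (X.X0 × Y.X0))
  proj0 := by haveI := X.proj0; haveI := Y.proj0; exact (inferInstance : Module.Projective R (X.X0 × Y.X0))
  d1 := ModuleCat.ofHom (LinearMap.prodMap X.d1.hom Y.d1.hom)
  d0 := ModuleCat.ofHom (LinearMap.prodMap X.d0.hom Y.d0.hom)
  dd1 := by
    have h1 : LinearMap.comp X.d0.hom X.d1.hom = 0 := congrArg ModuleCat.Hom.hom X.dd1
    have h2 : LinearMap.comp Y.d0.hom Y.d1.hom = 0 := congrArg ModuleCat.Hom.hom Y.dd1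
    apply ModuleCat.hom_ext
    show LinearMap.comp (LinearMap.prodMap X.d0.hom Y.d0.hom) (LinearMap.prodMap X.d1.hom Y.d1.hom) = 0
    rw [LinearMap.prodMap_comp, h1, h2, LinearMap.prodMap_zero]
  dd0 := by
    have h1 : LinearMap.comp X.d1.hom X.d0.hom = 0 := congrArg ModuleCat.Hom.hom X.dd0
    have h2 : LinearMap.comp Y.d1.hom Y.d0.hom = 0 := congrArg ModuleCat.Hom.hom Y.dd0
    apply ModuleCat.hom_ext
    show LinearMap.comp (LinearMap.prodMap X.d1.hom Y.d1.hom) (LinearMap.prodMap X.d0.hom Y.d0.hom) = 0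
    rw [LinearMap.prodMap_comp, h1, h2, LinearMap.prodMap_zero]

def kP (P : ModuleCat.{u} R) (h1 : Module.Finite R P) (h2 : Module.Projective R P) : TwoCx R :=
  ⟨P, P, h1, h2, h1, h2, 𝟙 P, 0, by simp, by simp⟩

def kS (P : ModuleCat.{u} R) (h1 : Module.Finite R P) (h2 : Module.Projective R P) : TwoCx R :=
  ⟨P, P, h1, h2, h1, h2, 0, 𝟙 P, by simp, by simp⟩

def starCx (X : TwoCx R) : TwoCx R :=
  ⟨X.X0, X.X1, X.fin0, X.proj0, X.fin1, X.proj1, -X.d0, -X.d1,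
    by simp [X.dd0], by simp [X.dd1]⟩

-- ## The homotopy category
variable (R) in
def htpRel : HomRel (TwoCx R) := fun _ _ f g => Homotopic f g

abbrev KTwo (R : Type u) [Ring R] := CategoryTheory.Quotient (htpRel R)

def KFun (R : Type u) [Ring R] : TwoCx R ⥤ KTwo R := Quotient.functor _

-- ## Short exact sequences
structure SESData (Y Z X : TwoCx R) where
  a : Y ⟶ Z
  b : Z ⟶ X
  inj1 : Function.Injective (TwoHom.f1 a)
  inj0 : Function.Injective (TwoHom.f0 a)
  surj1 : Function.Surjective (TwoHom.f1 b)
  surj0 : Function.Surjective (TwoHom.f0 b)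
  exact1 : LinearMap.range (TwoHom.f1 a).hom = LinearMap.ker (TwoHom.f1 b).hom
  exact0 : LinearMap.range (TwoHom.f0 a).hom = LinearMap.ker (TwoHom.f0 b).hom

def SESEquiv {Y X Z Z' : TwoCx R} (s : SESData Y Z X) (t : SESData Y Z' X) : Prop :=
  ∃ e : Z ≅ Z', s.a ≫ e.hom = t.a ∧ e.hom ≫ t.b = s.b

/-- The two components of a morphism `X ⟶ Y^*`, with their natural types. -/
def sf1 {X Y : TwoCx R} (f : X ⟶ starCx Y) : X.X1 →ₗ[R] Y.X0 := (TwoHom.f1 f).hom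
def sf0 {X Y : TwoCx R} (f : X ⟶ starCx Y) : X.X0 →ₗ[R] Y.X1 := (TwoHom.f0 f).hom

-- ## The middle term associated to `f : X ⟶ Y^*`
def coneCx {X Y : TwoCx R} (f : X ⟶ starCx Y) : TwoCx R where
  X1 := ModuleCat.of R (X.X1 × Y.X1)
  X0 := ModuleCat.of R (X.X0 × Y.X0)
  fin1 := by haveI := X.fin1; haveI := Y.fin1; exact (inferInstance : Module.Finite R (X.X1 × Y.X1))
  proj1 := by haveI := X.proj1; haveI := Y.proj1; exact (inferInstance : Module.Projective R (X.X1 × Y.X1))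
  fin0 := by haveI := X.fin0; haveI := Y.fin0; exact (inferInstance : Module.Finite R (X.X0 × Y.X0))
  proj0 := by haveI := X.proj0; haveI := Y.proj0; exact (inferInstance : Module.Projective R (X.X0 × Y.X0))
  d1 := ModuleCat.ofHom (LinearMap.prod (X.d1.hom ∘ₗ LinearMap.fst R X.X1 Y.X1)
    (Y.d1.hom ∘ₗ LinearMap.snd R X.X1 Y.X1 - sf1 f ∘ₗ LinearMap.fst R X.X1 Y.X1))
  d0 := ModuleCat.ofHom (LinearMap.prod (X.d0.hom ∘ₗ LinearMap.fst R X.X0 Y.X0)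
    (Y.d0.hom ∘ₗ LinearMap.snd R X.X0 Y.X0 - sf0 f ∘ₗ LinearMap.fst R X.X0 Y.X0))
  dd1 := by
    refine ModuleCat.hom_ext (LinearMap.ext fun p => Prod.ext ?_ ?_)
    · show X.d0.hom (X.d1.hom p.1) = 0
      exact LinearMap.congr_fun (congrArg ModuleCat.Hom.hom X.dd1) p.1
    · show Y.d0.hom (Y.d1.hom p.2 - sf1 f p.1) - sf0 f (X.d1.hom p.1) = 0
      have hY : Y.d0.hom (Y.d1.hom p.2) = 0 := LinearMap.congr_fun (congrArg ModuleCat.Hom.hom Y.dd1) p.2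
      have hc : sf0 f (X.d1.hom p.1) = -(Y.d0.hom (sf1 f p.1)) :=
        LinearMap.congr_fun (congrArg ModuleCat.Hom.hom f.comm1) p.1
      rw [map_sub, hY, hc]
      simp
  dd0 := by
    refine ModuleCat.hom_ext (LinearMap.ext fun p => Prod.ext ?_ ?_)
    · show X.d1.hom (X.d0.hom p.1) = 0
      exact LinearMap.congr_fun (congrArg ModuleCat.Hom.hom X.dd0) p.1
    · show Y.d1.hom (Y.d0.hom p.2 - sf0 f p.1) - sf1 f (X.d0.hom p.1) = 0
      have hY : Y.d1.hom (Y.d0.hom p.2) = 0 := LinearMap.congr_fun (congrArg ModuleCat.Hom.hom Y.dd0) p.2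
      have hc : sf1 f (X.d0.hom p.1) = -(Y.d1.hom (sf0 f p.1)) :=
        LinearMap.congr_fun (congrArg ModuleCat.Hom.hom f.comm0) p.1
      rw [map_sub, hY, hc]
      simp

/-- The canonical inclusion `Y ⟶ Z_f`. -/
def coneIn {X Y : TwoCx R} (f : X ⟶ starCx Y) : Y ⟶ coneCx f where
  f1 := ModuleCat.ofHom (LinearMap.inr R X.X1 Y.X1)
  f0 := ModuleCat.ofHom (LinearMap.inr R X.X0 Y.X0)
  comm1 := by
    refine ModuleCat.hom_ext (LinearMap.ext fun y => Prod.ext ?_ ?_)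
    · show (0 : X.X0) = X.d1.hom 0
      simp
    · show Y.d1.hom y = Y.d1.hom y - sf1 f 0
      simp
  comm0 := by
    refine ModuleCat.hom_ext (LinearMap.ext fun y => Prod.ext ?_ ?_)
    · show (0 : X.X1) = X.d0.hom 0
      simp
    · show Y.d0.hom y = Y.d0.hom y - sf0 f 0
      simp

/-- The canonical projection `Z_f ⟶ X`. -/
def coneOut {X Y : TwoCx R} (f : X ⟶ starCx Y) : coneCx f ⟶ X where
  f1 := ModuleCat.ofHom (LinearMap.fst R X.X1 Y.X1)
  f0 := ModuleCat.ofHom (LinearMap.fst R X.X0 Y.X0)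
  comm1 := ModuleCat.hom_ext (LinearMap.ext fun _ => rfl)
  comm0 := ModuleCat.hom_ext (LinearMap.ext fun _ => rfl)

/-- The canonical short exact sequence `0 ⟶ Y ⟶ Z_f ⟶ X ⟶ 0`. -/
def canonSES {X Y : TwoCx R} (f : X ⟶ starCx Y) : SESData Y (coneCx f) X where
  a := coneIn f
  b := coneOut f
  inj1 := LinearMap.inr_injective (R := R) (M := X.X1) (M₂ := Y.X1)
  inj0 := LinearMap.inr_injective (R := R) (M := X.X0) (M₂ := Y.X0)
  surj1 := LinearMap.fst_surjective (R := R) (M := X.X1) (M₂ := Y.X1)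
  surj0 := LinearMap.fst_surjective (R := R) (M := X.X0) (M₂ := Y.X0)
  exact1 := LinearMap.range_inr R X.X1 Y.X1
  exact0 := LinearMap.range_inr R X.X0 Y.X0

-- ## scalar endomorphisms
def scalarMod [Algebra ℂ R] (c : ℂ) (M : ModuleCat.{u} R) : M ⟶ M :=
  ModuleCat.ofHom
  ({ toFun := fun m => algebraMap ℂ R c • m
     map_add' := fun x y => smul_add _ x y
     map_smul' := fun r m => by
       simp only [RingHom.id_apply, smul_smul, Algebra.commutes] } : M →ₗ[R] M)

def scalarHom [Algebra ℂ R] (c : ℂ) (X : TwoCx R) : X ⟶ X where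
  f1 := scalarMod c X.X1
  f0 := scalarMod c X.X0
  comm1 := by
    refine ModuleCat.hom_ext (LinearMap.ext fun x => ?_)
    exact (map_smul X.d1.hom (algebraMap ℂ R c) x).symm
  comm0 := by
    refine ModuleCat.hom_ext (LinearMap.ext fun x => ?_)
    exact (map_smul X.d0.hom (algebraMap ℂ R c) x).symm

end


noncomputable section Aux

variable {R : Type u} [Ring R]

/-- Any linear map carries the radical into the radical. -/
theorem modRad_map_le {M N : ModuleCat.{u} R} (φ : M →ₗ[R] N) :
    Submodule.map φ (modRad M) ≤ modRad N := by
  refine le_sInf fun N' hN' => ?_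
  rw [Submodule.map_le_iff_le_comap]
  rcases eq_or_ne (Submodule.comap φ N') ⊤ with h | h
  · rw [h]; exact le_top
  refine sInf_le ⟨h, fun P hP => ?_⟩
  have h2 : ¬ Submodule.map φ P ≤ N' := fun hle =>
    absurd (Submodule.map_le_iff_le_comap.1 hle) (not_le_of_gt hP)
  have h3 : N' ⊔ Submodule.map φ P = ⊤ := by
    refine hN'.2 _ (lt_of_le_of_ne le_sup_left ?_)
    intro heq
    exact h2 (heq ▸ le_sup_right)
  refine eq_top_iff.2 fun m _ => ?_
  have : φ m ∈ N' ⊔ Submodule.map φ P := h3 ▸ Submodule.mem_top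
  obtain ⟨n', hn', q, hq, hsum⟩ := Submodule.mem_sup.1 this
  obtain ⟨p, hp, rfl⟩ := hq
  have : m - p ∈ Submodule.comap φ N' := by
    simp only [Submodule.mem_comap, map_sub]
    have : φ m - φ p = n' := by rw [← hsum]; abel
    exact this ▸ hn'
  have hmp : m - p ∈ P := le_of_lt hP this
  simpa using P.add_mem hmp hp

/-- Bijectivity of `1 + g` when `g` has range in the radical,
for a finite module over a finite-dimensional algebra. -/
theorem bijective_one_add {A : Type u} [Ring A] [Algebra ℂ A] [FiniteDimensional ℂ A]
    {M : ModuleCat.{u} Aᵐᵒᵖ} (hfin : Module.Finite Aᵐᵒᵖ M)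
    (g : M →ₗ[Aᵐᵒᵖ] M) (hg : LinearMap.range g ≤ modRad M) :
    Function.Bijective ((LinearMap.id : M →ₗ[Aᵐᵒᵖ] M) + g) := by
  have hcoat : IsCoatomic (Submodule Aᵐᵒᵖ M) :=
    CompleteLattice.coatomic_of_top_compact
      ((Submodule.fg_iff_compact _).1 (Module.finite_def.1 hfin))
  have hsurj : Function.Surjective (LinearMap.id + g : M →ₗ[Aᵐᵒᵖ] M) := by
    rw [← LinearMap.range_eq_top]
    by_contra hne
    obtain ⟨c, hc, hle⟩ :=
      (hcoat.eq_top_or_exists_le_coatom (LinearMap.range (LinearMap.id + g))).resolve_left hne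
    have hrad : modRad M ≤ c := sInf_le hc
    have : ∀ x : M, x ∈ c := by
      intro x
      have h1 : ((LinearMap.id : M →ₗ[Aᵐᵒᵖ] M) + g) x ∈ c := hle ⟨x, rfl⟩
      have h2 : g x ∈ c := hrad (hg ⟨x, rfl⟩)
      have := c.sub_mem h1 h2
      simpa using this
    exact hc.1 (eq_top_iff.2 fun x _ => this x)
  refine ⟨?_, hsurj⟩
  -- injectivity: use Noetherianness over ℂ
  letI : Module ℂ M := Module.compHom M (algebraMap ℂ Aᵐᵒᵖ)
  haveI : IsScalarTower ℂ Aᵐᵒᵖ M :=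
    ⟨fun c a m => by
      rw [Algebra.smul_def]
      exact mul_smul _ _ _⟩
  haveI : Module.Finite ℂ Aᵐᵒᵖ := Module.Finite.equiv (MulOpposite.opLinearEquiv ℂ)
  haveI : Module.Finite ℂ M := Module.Finite.trans Aᵐᵒᵖ M
  haveI : IsNoetherian ℂ M := IsNoetherian.iff_fg.2 inferInstance
  haveI : IsNoetherian Aᵐᵒᵖ M := isNoetherian_of_tower ℂ inferInstance
  exact IsNoetherian.injective_of_surjective_endomorphism _ hsurj

/-- A morphism of two-periodic complexes with both components bijective is an isomorphism. -/
theorem isIso_of_bijective {X Y : TwoCx R} (u : X ⟶ Y)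
    (h1 : Function.Bijective (TwoHom.f1 u)) (h0 : Function.Bijective (TwoHom.f0 u)) :
    IsIso u := by
  let e1 := LinearEquiv.ofBijective (TwoHom.f1 u).hom h1
  let e0 := LinearEquiv.ofBijective (TwoHom.f0 u).hom h0
  have comm1 : Y.d1 ≫ ModuleCat.ofHom (e0.symm : Y.X0 →ₗ[R] X.X0) =
      ModuleCat.ofHom (e1.symm : Y.X1 →ₗ[R] X.X1) ≫ X.d1 := by
    refine ModuleCat.hom_ext (LinearMap.ext fun y => ?_)
    apply e0.injective
    have hc : (TwoHom.f0 u).hom (X.d1.hom (e1.symm y)) = Y.d1.hom ((TwoHom.f1 u).hom (e1.symm y)) :=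
      LinearMap.congr_fun (congrArg ModuleCat.Hom.hom u.comm1) (e1.symm y)
    have hy : (TwoHom.f1 u).hom (e1.symm y) = y := e1.apply_symm_apply y
    show (TwoHom.f0 u).hom (e0.symm (Y.d1.hom y)) = (TwoHom.f0 u).hom (X.d1.hom (e1.symm y))
    rw [hc, hy]
    exact e0.apply_symm_apply _
  have comm0 : Y.d0 ≫ ModuleCat.ofHom (e1.symm : Y.X1 →ₗ[R] X.X1) =
      ModuleCat.ofHom (e0.symm : Y.X0 →ₗ[R] X.X0) ≫ X.d0 := by
    refine ModuleCat.hom_ext (LinearMap.ext fun y => ?_)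
    apply e1.injective
    have hc : (TwoHom.f1 u).hom (X.d0.hom (e0.symm y)) = Y.d0.hom ((TwoHom.f0 u).hom (e0.symm y)) :=
      LinearMap.congr_fun (congrArg ModuleCat.Hom.hom u.comm0) (e0.symm y)
    have hy : (TwoHom.f0 u).hom (e0.symm y) = y := e0.apply_symm_apply y
    show (TwoHom.f1 u).hom (e1.symm (Y.d0.hom y)) = (TwoHom.f1 u).hom (X.d0.hom (e0.symm y))
    rw [hc, hy]
    exact e1.apply_symm_apply _
  refine ⟨⟨⟨ModuleCat.ofHom (e1.symm : Y.X1 →ₗ[R] X.X1), ModuleCat.ofHom (e0.symm : Y.X0 →ₗ[R] X.X0),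
    comm1, comm0⟩, ?_, ?_⟩⟩
  · refine hom_ext ?_ ?_
    · exact ModuleCat.hom_ext (LinearMap.ext fun x => e1.symm_apply_apply x)
    · exact ModuleCat.hom_ext (LinearMap.ext fun x => e0.symm_apply_apply x)
  · refine hom_ext ?_ ?_
    · exact ModuleCat.hom_ext (LinearMap.ext fun y => e1.apply_symm_apply y)
    · exact ModuleCat.hom_ext (LinearMap.ext fun y => e0.apply_symm_apply y)

/-- If `f` is nullhomotopic and `X` is radical, the components of `f` have range
in the radical. -/
theorem range_le_modRad_of_homotopic_zero {X : TwoCx R} (hX : RadicalCx X)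
    {f : X ⟶ X} (hf : Homotopic f 0) :
    LinearMap.range (TwoHom.f1 f).hom ≤ modRad X.X1 ∧
    LinearMap.range (TwoHom.f0 f).hom ≤ modRad X.X0 := by
  obtain ⟨h1, h0, e1, e0⟩ := hf
  rw [zero_f1, sub_zero] at e1
  rw [zero_f0, sub_zero] at e0
  constructor
  · rintro _ ⟨x, rfl⟩
    have := LinearMap.congr_fun (congrArg ModuleCat.Hom.hom e1) x
    show (TwoHom.f1 f).hom x ∈ modRad X.X1
    rw [this]
    show X.d0.hom (h1.hom x) + h0.hom (X.d1.hom x) ∈ modRad X.X1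
    refine Submodule.add_mem _ (hX.2 ⟨h1.hom x, rfl⟩) ?_
    exact modRad_map_le h0.hom ⟨X.d1.hom x, hX.1 ⟨x, rfl⟩, rfl⟩
  · rintro _ ⟨x, rfl⟩
    have := LinearMap.congr_fun (congrArg ModuleCat.Hom.hom e0) x
    show (TwoHom.f0 f).hom x ∈ modRad X.X0
    rw [this]
    show X.d1.hom (h0.hom x) + h1.hom (X.d0.hom x) ∈ modRad X.X0
    refine Submodule.add_mem _ (hX.1 ⟨h0.hom x, rfl⟩) ?_
    exact modRad_map_le h1.hom ⟨X.d0.hom x, hX.2 ⟨x, rfl⟩, rfl⟩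

/-- Key lemma: for a radical complex over a finite-dimensional algebra,
`1 + f` is an isomorphism whenever `f ∼ 0`. -/
theorem isIso_one_add {A : Type u} [Ring A] [Algebra ℂ A] [FiniteDimensional ℂ A]
    {X : TwoCx Aᵐᵒᵖ} (hX : RadicalCx X) {f : X ⟶ X} (hf : Homotopic f 0) :
    IsIso (𝟙 X + f) := by
  obtain ⟨hr1, hr0⟩ := range_le_modRad_of_homotopic_zero hX hf
  refine isIso_of_bijective _ ?_ ?_
  · have : (TwoHom.f1 (𝟙 X + f)).hom = LinearMap.id + (TwoHom.f1 f).hom := by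
      rw [add_f1, id_f1]; rfl
    have hb := bijective_one_add X.fin1 _ hr1
    rw [← this] at hb
    exact hb
  · have : (TwoHom.f0 (𝟙 X + f)).hom = LinearMap.id + (TwoHom.f0 f).hom := by
      rw [add_f0, id_f0]; rfl
    have hb := bijective_one_add X.fin0 _ hr0
    rw [← this] at hb
    exact hb

theorem homotopic_sub_zero {X Y : TwoCx R} (f g : X ⟶ Y) :
    Homotopic f g ↔ Homotopic (f - g) 0 := by
  unfold Homotopic
  simp only [sub_f1, sub_f0, zero_f1, zero_f0, sub_zero]

theorem isIso_of_homotopic_id {A : Type u} [Ring A] [Algebra ℂ A] [FiniteDimensional ℂ A]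
    {X : TwoCx Aᵐᵒᵖ} (hX : RadicalCx X) {u : X ⟶ X} (hu : Homotopic u (𝟙 X)) :
    IsIso u := by
  have h0 : Homotopic (u - 𝟙 X) 0 := (homotopic_sub_zero u (𝟙 X)).1 hu
  have := isIso_one_add hX h0
  rwa [add_sub_cancel] at this

/-- The homotopy relation is a congruence. -/
instance htpRel_congruence : Congruence (htpRel R) where
  equivalence := by
    refine ⟨fun f => ⟨0, 0, ?_, ?_⟩, ?_, ?_⟩
    · simp
    · simp
    · rintro f g ⟨h1, h0, e1, e0⟩
      refine ⟨-h1, -h0, ?_, ?_⟩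
      · rw [← neg_sub (TwoHom.f1 f), e1]
        simp only [Preadditive.neg_comp, Preadditive.comp_neg, neg_add]
      · rw [← neg_sub (TwoHom.f0 f), e0]
        simp only [Preadditive.neg_comp, Preadditive.comp_neg, neg_add]
    · rintro f g k ⟨h1, h0, e1, e0⟩ ⟨h1', h0', e1', e0'⟩
      refine ⟨h1 + h1', h0 + h0', ?_, ?_⟩
      · have : TwoHom.f1 f - TwoHom.f1 k =
            (TwoHom.f1 f - TwoHom.f1 g) + (TwoHom.f1 g - TwoHom.f1 k) := by abel
        rw [this, e1, e1']
        simp only [Preadditive.add_comp, Preadditive.comp_add]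
        abel
      · have : TwoHom.f0 f - TwoHom.f0 k =
            (TwoHom.f0 f - TwoHom.f0 g) + (TwoHom.f0 g - TwoHom.f0 k) := by abel
        rw [this, e0, e0']
        simp only [Preadditive.add_comp, Preadditive.comp_add]
        abel
  comp_left := by
    rintro X Y Z f g g' ⟨h1, h0, e1, e0⟩
    refine ⟨TwoHom.f1 f ≫ h1, TwoHom.f0 f ≫ h0, ?_, ?_⟩
    · show TwoHom.f1 f ≫ TwoHom.f1 g - TwoHom.f1 f ≫ TwoHom.f1 g' = _
      rw [← Preadditive.comp_sub, e1]
      simp only [Preadditive.comp_add, ← Category.assoc]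
      rw [← f.comm1]
    · show TwoHom.f0 f ≫ TwoHom.f0 g - TwoHom.f0 f ≫ TwoHom.f0 g' = _
      rw [← Preadditive.comp_sub, e0]
      simp only [Preadditive.comp_add, ← Category.assoc]
      rw [← f.comm0]
  comp_right := by
    rintro X Y Z f f' g ⟨h1, h0, e1, e0⟩
    refine ⟨h1 ≫ TwoHom.f0 g, h0 ≫ TwoHom.f1 g, ?_, ?_⟩
    · show TwoHom.f1 f ≫ TwoHom.f1 g - TwoHom.f1 f' ≫ TwoHom.f1 g = _
      rw [← Preadditive.sub_comp, e1]
      simp only [Preadditive.add_comp, Category.assoc]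
      rw [g.comm0]
    · show TwoHom.f0 f ≫ TwoHom.f0 g - TwoHom.f0 f' ≫ TwoHom.f0 g = _
      rw [← Preadditive.sub_comp, e0]
      simp only [Preadditive.add_comp, Category.assoc]
      rw [g.comm1]

theorem KFun_map_eq_iff {X Y : TwoCx R} (f g : X ⟶ Y) :
    (KFun R).map f = (KFun R).map g ↔ Homotopic f g :=
  Quotient.functor_map_eq_iff (htpRel R) f g

end Aux

/-- For a radical object `X` of `C₂(P)`, the natural projection
`End_{C₂(P)}(X) → End_{K₂(P)}(X)` restricts to a surjective group homomorphism
`Aut_{C₂(P)}(X) → Aut_{K₂(P)}(X)` whose kernel is `{1_X + f | f ∈ Htp(X,X)}`; in particular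
`f ↦ 1_X + f` is a bijection from `Htp(X,X)` onto the kernel. -/
theorem statement_3 {A : Type u} [Ring A] [Algebra ℂ A] [FiniteDimensional ℂ A]
    (X : TwoCx Aᵐᵒᵖ) (hX : RadicalCx X) :
    Function.Surjective ((KFun Aᵐᵒᵖ).mapAut X) ∧
    Set.BijOn (fun f : X ⟶ X => 𝟙 X + f)
      {f : X ⟶ X | Homotopic f 0}
      {u : X ⟶ X | IsIso u ∧ (KFun Aᵐᵒᵖ).map u = (KFun Aᵐᵒᵖ).map (𝟙 X)} := by
  constructor
  · -- surjectivity of the map on automorphism groups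
    intro σ
    haveI : (KFun Aᵐᵒᵖ).Full := Quotient.full_functor (htpRel Aᵐᵒᵖ)
    obtain ⟨f, hf⟩ := (KFun Aᵐᵒᵖ).map_surjective σ.hom
    obtain ⟨g, hg⟩ := (KFun Aᵐᵒᵖ).map_surjective σ.inv
    have hfg : Homotopic (f ≫ g) (𝟙 X) := by
      rw [← KFun_map_eq_iff, Functor.map_comp, hf, hg, σ.hom_inv_id, CategoryTheory.Functor.map_id]
    have hgf : Homotopic (g ≫ f) (𝟙 X) := by
      rw [← KFun_map_eq_iff, Functor.map_comp, hf, hg, σ.inv_hom_id, CategoryTheory.Functor.map_id]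
    have hIfg : IsIso (f ≫ g) := isIso_of_homotopic_id hX hfg
    have hIgf : IsIso (g ≫ f) := isIso_of_homotopic_id hX hgf
    have hl : (inv (g ≫ f) ≫ g) ≫ f = 𝟙 X := by
      rw [Category.assoc]; exact IsIso.inv_hom_id _
    have hr : f ≫ (g ≫ inv (f ≫ g)) = 𝟙 X := by
      rw [← Category.assoc]; exact IsIso.hom_inv_id _
    have heq : inv (g ≫ f) ≫ g = g ≫ inv (f ≫ g) := by
      calc inv (g ≫ f) ≫ g
          = (inv (g ≫ f) ≫ g) ≫ (f ≫ (g ≫ inv (f ≫ g))) := by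
            rw [hr, Category.comp_id]
        _ = ((inv (g ≫ f) ≫ g) ≫ f) ≫ (g ≫ inv (f ≫ g)) := by
            simp only [Category.assoc]
        _ = g ≫ inv (f ≫ g) := by rw [hl, Category.id_comp]
    haveI : IsIso f := ⟨⟨g ≫ inv (f ≫ g), hr, by rw [← heq]; exact hl⟩⟩
    refine ⟨asIso f, Iso.ext ?_⟩
    exact hf
  · refine ⟨?_, ?_, ?_⟩
    · -- maps to
      intro f hf
      have h1 : Homotopic (𝟙 X + f) (𝟙 X) := by
        rw [homotopic_sub_zero, add_sub_cancel_left]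
        exact hf
      exact ⟨isIso_of_homotopic_id hX h1, (KFun_map_eq_iff _ _).2 h1⟩
    · -- inj on
      intro f _ g _ h
      exact add_left_cancel h
    · -- surj on
      rintro u ⟨_, hmap⟩
      refine ⟨u - 𝟙 X, ?_, ?_⟩
      · show Homotopic (u - 𝟙 X) 0
        rw [← homotopic_sub_zero]
        exact (KFun_map_eq_iff u (𝟙 X)).1 hmap
      · show 𝟙 X + (u - 𝟙 X) = u
        rw [add_comm, sub_add_cancel]
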